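/- Suppose the nonnegative sequence (μ_k)_{k≥1} satisfies μ_k ≤ C·k^{-2α} for some constants C > 0 and α > 1/2. Define Q_n(t) = (1/√n)·(∑_{k=1}^∞ min{t², μ_k})^{1/2}. Then there is a constant C' depending only on (C, α) such that Q_n(t) ≤ C' · t^{1 - 1/(2α)} / √n for all t ∈ (0,1]. Consequently, the smallest positive ν satisfying 40ν² ≥ Q_n(ν) obeys ν² ≤ C'' · n^{-2α/(2α+1)} for a constant C'' depending only on (C, α). -/

import Mathlib

open Real Filter Topology


lemma scr_step {a x : ℝ} (ha : 1 < a) (hx : 0 < x) :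
    (x + 1) ^ (-a) ≤ (x ^ (1 - a) - (x + 1) ^ (1 - a)) / (a - 1) := by
  have hx1 : (0:ℝ) < x + 1 := by linarith
  rw [le_div_iff₀ (by linarith)]
  have hb : 1 + a * (1 / x) ≤ (1 + 1 / x) ^ a :=
    one_add_mul_self_le_rpow_one_add (le_trans (by norm_num : (-1:ℝ) ≤ 0) (by positivity)) ha.le
  have h1 : (1 : ℝ) + 1 / x = (x + 1) / x := by field_simp
  have key : x + a ≤ x ^ (1 - a) * (x + 1) ^ a := by
    have h2 : x ^ (1 - a) * (x + 1) ^ a = x * ((x + 1) / x) ^ a := by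
      rw [Real.div_rpow hx1.le hx.le, Real.rpow_sub hx, Real.rpow_one]
      field_simp
    rw [h2, ← h1]
    calc x + a = x * (1 + a * (1 / x)) := by field_simp
      _ ≤ x * (1 + 1 / x) ^ a := by
          exact mul_le_mul_of_nonneg_left hb hx.le
  have e1 : (x + 1) ^ (1 - a) = (x + 1) * (x + 1) ^ (-a) := by
    rw [← Real.rpow_one_add' hx1.le (by intro h; linarith : (1:ℝ) + -a ≠ 0)]
    ring_nf
  have e2 : x ^ (1 - a) = x ^ (1 - a) * (x + 1) ^ a * (x + 1) ^ (-a) := by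
    rw [mul_assoc, ← Real.rpow_add hx1, add_neg_cancel, Real.rpow_zero, mul_one]
  have hP : (0:ℝ) < (x + 1) ^ (-a) := Real.rpow_pos_of_pos hx1 _
  nlinarith [key, hP]

lemma scr_tail {a : ℝ} (ha : 1 < a) {K : ℕ} (hK : 1 ≤ K) :
    ∑' k : ℕ, ((k + K + 1 : ℕ) : ℝ) ^ (-a) ≤ (K : ℝ) ^ (1 - a) / (a - 1) := by
  set c : ℕ → ℝ := fun k => ((K + k : ℕ) : ℝ) ^ (1 - a) / (a - 1) with hc
  have hKpos : ∀ k : ℕ, (0:ℝ) < ((K + k : ℕ) : ℝ) := by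
    intro k
    have : 1 ≤ K + k := le_trans hK (Nat.le_add_right _ _)
    exact_mod_cast Nat.lt_of_lt_of_le Nat.zero_lt_one this
  have hcnn : ∀ k, 0 ≤ c k - c (k + 1) := by
    intro k
    have h1 : ((K + (k+1) : ℕ) : ℝ) ^ (1 - a) ≤ ((K + k : ℕ) : ℝ) ^ (1 - a) := by
      apply Real.rpow_le_rpow_of_nonpos (hKpos k) (by push_cast; linarith) (by linarith)
    have : (0:ℝ) < a - 1 := by linarith
    simp only [hc]
    rw [sub_nonneg, div_le_div_iff₀ this this]
    nlinarith
  have hc0 : Tendsto c atTop (𝓝 0) := by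
    have h1 : Tendsto (fun k : ℕ => ((K + k : ℕ) : ℝ)) atTop atTop := by
      apply tendsto_natCast_atTop_atTop.comp
      exact tendsto_atTop_atTop_of_monotone (fun _ _ h => by omega) (fun b => ⟨b, by omega⟩)
    have h2 : Tendsto (fun x : ℝ => x ^ (-(a-1))) atTop (𝓝 0) :=
      tendsto_rpow_neg_atTop (by linarith)
    have h3 : Tendsto (fun k : ℕ => ((K + k : ℕ) : ℝ) ^ (1 - a)) atTop (𝓝 0) := by
      have := h2.comp h1
      convert this using 2 with k
      norm_num
    have h4 := h3.div_const (a - 1)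
    rw [hc]
    simpa using h4
  have htel : HasSum (fun k => c k - c (k + 1)) (c 0) := by
    rw [hasSum_iff_tendsto_nat_of_nonneg hcnn]
    have : ∀ n : ℕ, ∑ i ∈ Finset.range n, (c i - c (i + 1)) = c 0 - c n := by
      intro n; exact Finset.sum_range_sub' c n
    simp only [this]
    simpa using tendsto_const_nhds.sub hc0
  have hterm : ∀ k : ℕ, ((k + K + 1 : ℕ) : ℝ) ^ (-a) ≤ c k - c (k + 1) := by
    intro k
    have hx : (0:ℝ) < ((K + k : ℕ) : ℝ) := hKpos k
    have := scr_step ha hx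
    have e1 : ((k + K + 1 : ℕ) : ℝ) = ((K + k : ℕ) : ℝ) + 1 := by push_cast; ring
    have e2 : ((K + (k+1) : ℕ) : ℝ) = ((K + k : ℕ) : ℝ) + 1 := by push_cast; ring
    rw [e1]
    simp only [hc, e2]
    rw [← sub_div]
    exact this
  have hsum : Summable (fun k : ℕ => ((k + K + 1 : ℕ) : ℝ) ^ (-a)) := by
    apply Summable.of_nonneg_of_le (fun k => (Real.rpow_pos_of_pos (by positivity) _).le) hterm
    exact htel.summable
  calc ∑' k : ℕ, ((k + K + 1 : ℕ) : ℝ) ^ (-a)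
      ≤ ∑' k, (c k - c (k + 1)) := Summable.tsum_le_tsum hterm hsum htel.summable
    _ = c 0 := htel.tsum_eq
    _ = (K : ℝ) ^ (1 - a) / (a - 1) := by rw [hc]; norm_num

lemma scr_Sbound {C α : ℝ} (hC : 0 < C) (hα : 1 / 2 < α) (μ : ℕ → ℝ)
    (hμ0 : ∀ k, 0 ≤ μ k) (hμ : ∀ k : ℕ, 1 ≤ k → μ k ≤ C * (k : ℝ) ^ (-(2 * α)))
    {t : ℝ} (ht : 0 < t) (ht1 : t ≤ 1) :
    ∑' k : ℕ, min (t ^ 2) (μ (k + 1)) ≤ (2 + C / (2 * α - 1)) * t ^ (2 - 1 / α) := by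
  have hα0 : (0:ℝ) < α := by linarith
  have ha : (1:ℝ) < 2 * α := by linarith
  -- summability
  have hgs : Summable (fun k : ℕ => C * ((k + 1 : ℕ) : ℝ) ^ (-(2 * α))) := by
    apply Summable.mul_left
    exact (summable_nat_add_iff 1).mpr (Real.summable_nat_rpow.mpr (by linarith))
  have hmin0 : ∀ k : ℕ, 0 ≤ min (t ^ 2) (μ (k + 1)) := fun k =>
    le_min (by positivity) (hμ0 _)
  have hminle : ∀ k : ℕ, min (t ^ 2) (μ (k + 1)) ≤ C * ((k + 1 : ℕ) : ℝ) ^ (-(2 * α)) :=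
    fun k => le_trans (min_le_right _ _) (hμ (k + 1) (by omega))
  have hs : Summable (fun k : ℕ => min (t ^ 2) (μ (k + 1))) :=
    Summable.of_nonneg_of_le hmin0 hminle hgs
  -- the ceiling
  set x : ℝ := t ^ (-(1 / α)) with hxdef
  have hx1 : (1:ℝ) ≤ x := by
    have := Real.rpow_le_rpow_of_nonpos ht ht1 (neg_nonpos.mpr (by positivity) : -(1/α) ≤ 0)
    simpa [hxdef] using this
  have hx0 : (0:ℝ) < x := by linarith
  set K : ℕ := ⌈x⌉₊ with hKdef
  have hK1 : 1 ≤ K := Nat.one_le_ceil_iff.mpr hx0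
  have hKx : x ≤ (K : ℝ) := Nat.le_ceil x
  have hKx1 : (K : ℝ) ≤ x + 1 := (Nat.ceil_lt_add_one hx0.le).le
  -- split
  rw [← Summable.sum_add_tsum_nat_add K hs]
  -- head bound
  have hhead : ∑ i ∈ Finset.range K, min (t ^ 2) (μ (i + 1)) ≤ (K : ℝ) * t ^ 2 := by
    calc ∑ i ∈ Finset.range K, min (t ^ 2) (μ (i + 1))
        ≤ ∑ _i ∈ Finset.range K, t ^ 2 :=
          Finset.sum_le_sum fun i _ => min_le_left _ _
      _ = (K : ℝ) * t ^ 2 := by simp [mul_comm]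
  -- tail bound
  have htail : ∑' i : ℕ, min (t ^ 2) (μ (i + K + 1)) ≤ C * ((K:ℝ) ^ (1 - 2*α) / (2*α - 1)) := by
    have h1 : ∀ i : ℕ, min (t ^ 2) (μ (i + K + 1)) ≤ C * ((i + K + 1 : ℕ) : ℝ) ^ (-(2 * α)) :=
      fun i => le_trans (min_le_right _ _) (hμ (i + K + 1) (by omega))
    have h2 : Summable (fun i : ℕ => C * ((i + K + 1 : ℕ) : ℝ) ^ (-(2 * α))) := by
      apply Summable.mul_left
      have := (summable_nat_add_iff (K + 1)).mpr (Real.summable_nat_rpow.mpr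
        (by linarith : -(2*α) < -1))
      exact this
    calc ∑' i : ℕ, min (t ^ 2) (μ (i + K + 1))
        ≤ ∑' i : ℕ, C * ((i + K + 1 : ℕ) : ℝ) ^ (-(2 * α)) := by
          apply Summable.tsum_le_tsum h1 _ h2
          exact (summable_nat_add_iff K).mpr hs |>.congr (fun i => by ring_nf)
      _ = C * ∑' i : ℕ, ((i + K + 1 : ℕ) : ℝ) ^ (-(2 * α)) := tsum_mul_left
      _ ≤ C * ((K:ℝ) ^ (1 - 2*α) / (2*α - 1)) := by
          apply mul_le_mul_of_nonneg_left _ hC.le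
          exact scr_tail ha hK1
  -- now combine with rpow arithmetic
  have ht2 : t ^ 2 = t ^ ((2:ℝ)) := by
    rw [← Real.rpow_natCast t 2]; norm_num
  have hmulK : (K : ℝ) * t ^ 2 ≤ 2 * t ^ (2 - 1/α) := by
    have e1 : x * t ^ ((2:ℝ)) = t ^ (2 - 1/α) := by
      rw [hxdef, ← Real.rpow_add ht]; ring_nf
    have e2 : t ^ ((2:ℝ)) ≤ t ^ (2 - 1/α) := by
      apply Real.rpow_le_rpow_of_exponent_ge ht ht1
      have : 0 < 1/α := by positivity
      linarith
    have htp : (0:ℝ) < t ^ ((2:ℝ)) := Real.rpow_pos_of_pos ht _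
    calc (K : ℝ) * t ^ 2 = (K : ℝ) * t ^ ((2:ℝ)) := by rw [ht2]
      _ ≤ (x + 1) * t ^ ((2:ℝ)) := by apply mul_le_mul_of_nonneg_right hKx1 htp.le
      _ = x * t ^ ((2:ℝ)) + t ^ ((2:ℝ)) := by ring
      _ ≤ t ^ (2 - 1/α) + t ^ (2 - 1/α) := by rw [e1]; linarith [e2]
      _ = 2 * t ^ (2 - 1/α) := by ring
  have hKpow : (K : ℝ) ^ (1 - 2*α) ≤ t ^ (2 - 1/α) := by
    have h1 : (K : ℝ) ^ (1 - 2*α) ≤ x ^ (1 - 2*α) :=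
      Real.rpow_le_rpow_of_nonpos hx0 hKx (by linarith)
    have h2 : x ^ (1 - 2*α) = t ^ (2 - 1/α) := by
      rw [hxdef, ← Real.rpow_mul ht.le]
      congr 1
      field_simp
      ring
    linarith [h1, h2 ▸ h1]
  have hden : (0:ℝ) < 2*α - 1 := by linarith
  have htpos : (0:ℝ) < t ^ (2 - 1/α) := Real.rpow_pos_of_pos ht _
  have hfin : C * ((K:ℝ) ^ (1 - 2*α) / (2*α - 1)) ≤ (C / (2*α-1)) * t ^ (2 - 1/α) := by
    rw [div_mul_eq_mul_div, mul_div_assoc]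
    apply mul_le_mul_of_nonneg_left _ hC.le
    exact (div_le_div_iff_of_pos_right hden).mpr hKpow
  linarith [hhead, htail, hmulK, hfin]

lemma scr_summable {C α : ℝ} (hC : 0 < C) (hα : 1 / 2 < α) (μ : ℕ → ℝ)
    (hμ0 : ∀ k, 0 ≤ μ k) (hμ : ∀ k : ℕ, 1 ≤ k → μ k ≤ C * (k : ℝ) ^ (-(2 * α)))
    (t : ℝ) : Summable (fun k : ℕ => min (t ^ 2) (μ (k + 1))) := by
  apply Summable.of_nonneg_of_le (fun k => le_min (by positivity) (hμ0 _))
    (fun k => le_trans (min_le_right _ _) (hμ (k + 1) (by omega)))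
  apply Summable.mul_left
  exact (summable_nat_add_iff 1).mpr (Real.summable_nat_rpow.mpr (by linarith))


set_option maxHeartbeats 1000000 in
/-- For kernels with polynomial eigenvalue decay `μ_k ≤ C k^{-2α}` (`α > 1/2`),
the localized complexity `Q_n(t) = n^{-1/2} (∑_k min(t², μ_k))^{1/2}` satisfies
`Q_n(t) ≤ C' t^{1-1/(2α)}/√n` on `(0,1]`, and the smallest positive solution `ν`
of `40 ν² ≥ Q_n(ν)` satisfies `ν² ≤ C'' n^{-2α/(2α+1)}`, with `C', C''`
depending only on `(C, α)`. -/
theorem sobolev_critical_radius (C α : ℝ) (hC : 0 < C) (hα : 1 / 2 < α) :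
    ∃ C' > (0:ℝ), ∃ C'' > (0:ℝ),
      ∀ (n : ℕ), 1 ≤ n → ∀ (μ : ℕ → ℝ), (∀ k, 0 ≤ μ k) →
        (∀ k : ℕ, 1 ≤ k → μ k ≤ C * (k : ℝ) ^ (-(2 * α))) →
        ((∀ t : ℝ, 0 < t → t ≤ 1 →
            (1 / Real.sqrt n) * Real.sqrt (∑' k : ℕ, min (t ^ 2) (μ (k + 1))) ≤
              C' * t ^ (1 - 1 / (2 * α)) / Real.sqrt n) ∧
          (∀ ν : ℝ,
            IsLeast {v : ℝ | 0 < v ∧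
                (1 / Real.sqrt n) * Real.sqrt (∑' k : ℕ, min (v ^ 2) (μ (k + 1)))
                  ≤ 40 * v ^ 2} ν →
            ν ^ 2 ≤ C'' * (n : ℝ) ^ (-(2 * α) / (2 * α + 1)))) := by
  have hα0 : (0:ℝ) < α := by linarith
  have hden : (0:ℝ) < 2 * α - 1 := by linarith
  have hden2 : (0:ℝ) < 2 * α + 1 := by linarith
  set A : ℝ := 2 + C / (2 * α - 1) with hAdef
  have hA : 0 < A := by have : 0 < C / (2*α-1) := by positivity
                        simp only [hAdef]; linarith
  set C' : ℝ := Real.sqrt A with hC'def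
  have hC'pos : 0 < C' := Real.sqrt_pos.mpr hA
  set p : ℝ := 2 * α / (2 * α + 1) with hpdef
  have hp0 : 0 < p := by positivity
  set M : ℝ := max 1 (C' / 40) with hMdef
  have hM1 : (1:ℝ) ≤ M := le_max_left _ _
  have hM0 : (0:ℝ) < M := by linarith
  have hMC' : C' / 40 ≤ M := le_max_right _ _
  refine ⟨C', hC'pos, M ^ (2 * p + 2), Real.rpow_pos_of_pos hM0 _, ?_⟩
  intro n hn μ hμ0 hμb
  have hn0 : (0:ℝ) < (n:ℝ) := by exact_mod_cast Nat.lt_of_lt_of_le Nat.zero_lt_one hn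
  have hn1 : (1:ℝ) ≤ (n:ℝ) := by exact_mod_cast hn
  have hsn : (0:ℝ) < Real.sqrt n := Real.sqrt_pos.mpr hn0
  have hsn1 : (1:ℝ) ≤ Real.sqrt n := by
    rw [show (1:ℝ) = Real.sqrt 1 by simp]
    exact Real.sqrt_le_sqrt hn1
  -- the first claim
  have hQ : ∀ t : ℝ, 0 < t → t ≤ 1 →
      (1 / Real.sqrt n) * Real.sqrt (∑' k : ℕ, min (t ^ 2) (μ (k + 1))) ≤
        C' * t ^ (1 - 1 / (2 * α)) / Real.sqrt n := by
    intro t ht ht1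
    have hS := scr_Sbound hC hα μ hμ0 hμb ht ht1
    have h1 : Real.sqrt (∑' k : ℕ, min (t ^ 2) (μ (k + 1))) ≤
        Real.sqrt (A * t ^ (2 - 1/α)) := Real.sqrt_le_sqrt hS
    have h2 : Real.sqrt (A * t ^ (2 - 1/α)) = C' * t ^ (1 - 1 / (2 * α)) := by
      rw [Real.sqrt_mul hA.le, hC'def]
      congr 1
      rw [Real.sqrt_eq_rpow, ← Real.rpow_mul ht.le,
        show (2 - 1/α) * (1/2) = 1 - 1/(2*α) from by field_simp; try ring; try tauto]
    calc (1 / Real.sqrt n) * Real.sqrt (∑' k : ℕ, min (t ^ 2) (μ (k + 1)))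
        = Real.sqrt (∑' k : ℕ, min (t ^ 2) (μ (k + 1))) / Real.sqrt n := by ring
      _ ≤ C' * t ^ (1 - 1 / (2 * α)) / Real.sqrt n :=
          (div_le_div_iff_of_pos_right hsn).mpr (h2 ▸ h1)
  refine ⟨hQ, ?_⟩
  intro ν hν
  obtain ⟨⟨hν0, _⟩, hlb⟩ := hν
  have hnegdiv : -(2 * α) / (2 * α + 1) = -p := by rw [hpdef, neg_div]
  rw [hnegdiv, Real.rpow_neg hn0.le]
  set x₀ : ℝ := C' / (40 * Real.sqrt n) with hx₀def
  have hx₀ : 0 < x₀ := by positivity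
  set v : ℝ := x₀ ^ p with hvdef
  have hv0 : 0 < v := Real.rpow_pos_of_pos hx₀ _
  have hnp : (0:ℝ) < (n:ℝ) ^ p := Real.rpow_pos_of_pos hn0 _
  by_cases hvle : v ≤ 1
  · -- small case: v is in the set
    have hveq : 40 * v ^ 2 = C' * v ^ (1 - 1 / (2 * α)) / Real.sqrt n := by
      have e1 : v ^ 2 = v ^ (1 - 1 / (2 * α)) * v ^ (1 + 1 / (2 * α)) := by
        rw [← Real.rpow_natCast v 2, ← Real.rpow_add hv0]
        norm_num
      have e2 : v ^ (1 + 1 / (2 * α)) = x₀ := by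
        rw [hvdef, ← Real.rpow_mul hx₀.le]
        rw [show p * (1 + 1 / (2 * α)) = 1 by rw [hpdef]; field_simp; try ring; try tauto]
        exact Real.rpow_one x₀
      rw [e1, e2, hx₀def]
      field_simp
    have hvmem : ν ≤ v := by
      apply hlb
      refine ⟨hv0, ?_⟩
      rw [hveq]
      exact hQ v hv0 hvle
    have hν2 : ν ^ 2 ≤ v ^ 2 := pow_le_pow_left₀ hν0.le hvmem 2
    have hv2 : v ^ 2 = (C' / 40) ^ (p * 2) / (n:ℝ) ^ p := by
      rw [hvdef, ← Real.rpow_natCast (x₀ ^ p) 2, ← Real.rpow_mul hx₀.le]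
      push_cast
      rw [hx₀def, show C' / (40 * Real.sqrt n) = (C' / 40) / Real.sqrt n by ring,
        Real.div_rpow (by positivity) hsn.le]
      congr 1
      rw [Real.sqrt_eq_rpow, ← Real.rpow_mul hn0.le]
      congr 1
      ring
    have hcoef : (C' / 40) ^ (p * 2) ≤ M ^ (2 * p + 2) := by
      calc (C' / 40) ^ (p * 2) ≤ M ^ (p * 2) :=
            Real.rpow_le_rpow (by positivity) hMC' (by positivity)
        _ ≤ M ^ (2 * p + 2) :=
            Real.rpow_le_rpow_of_exponent_le hM1 (by linarith)
    calc ν ^ 2 ≤ v ^ 2 := hν2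
      _ = (C' / 40) ^ (p * 2) / (n:ℝ) ^ p := hv2
      _ ≤ M ^ (2 * p + 2) / (n:ℝ) ^ p := (div_le_div_iff_of_pos_right hnp).mpr hcoef
      _ = M ^ (2 * p + 2) * ((n:ℝ) ^ p)⁻¹ := by rw [div_eq_mul_inv]
  · -- large case: M is in the set
    push_neg at hvle
    have hx₀1 : 1 < x₀ := by
      by_contra h
      push_neg at h
      exact absurd (Real.rpow_le_one hx₀.le h hp0.le) (not_le.mpr hvle)
    have hsnM : Real.sqrt n < M := by
      have h40 : 40 * Real.sqrt n < C' := by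
        rw [hx₀def, lt_div_iff₀ (by positivity)] at hx₀1
        linarith
      calc Real.sqrt n < C' / 40 := by linarith
        _ ≤ M := hMC'
    have hnM2 : (n:ℝ) ≤ M ^ (2:ℝ) := by
      have e : M ^ (2:ℝ) = M * M := by
        rw [show (2:ℝ) = ((2:ℕ):ℝ) by norm_num, Real.rpow_natCast]
        ring
      rw [e]
      nlinarith [Real.mul_self_sqrt hn0.le, hsnM, hsn.le]
    -- membership of M
    have hSM : ∑' k : ℕ, min (M ^ 2) (μ (k + 1)) ≤ M ^ 2 * A := by
      have hpt : ∀ k : ℕ, min (M ^ 2) (μ (k + 1)) ≤ M ^ 2 * min (1 ^ 2) (μ (k + 1)) := by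
        intro k
        rcases le_total (μ (k + 1)) 1 with h | h
        · rw [one_pow, min_eq_right h]
          calc min (M ^ 2) (μ (k+1)) ≤ μ (k+1) := min_le_right _ _
            _ ≤ M ^ 2 * μ (k+1) := le_mul_of_one_le_left (hμ0 _) (by rw [pow_two]; simpa using mul_le_mul hM1 hM1 zero_le_one (le_trans zero_le_one hM1))
        · rw [one_pow, min_eq_left h]
          calc min (M ^ 2) (μ (k+1)) ≤ M ^ 2 := min_le_left _ _
            _ = M ^ 2 * 1 := (mul_one _).symm
      have hS1 : ∑' k : ℕ, min ((1:ℝ) ^ 2) (μ (k + 1)) ≤ A := by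
        have := scr_Sbound hC hα μ hμ0 hμb one_pos le_rfl
        simpa using this
      calc ∑' k : ℕ, min (M ^ 2) (μ (k + 1))
          ≤ ∑' k : ℕ, M ^ 2 * min ((1:ℝ) ^ 2) (μ (k + 1)) := by
            apply Summable.tsum_le_tsum hpt (scr_summable hC hα μ hμ0 hμb M)
            exact (scr_summable hC hα μ hμ0 hμb 1).mul_left _
        _ = M ^ 2 * ∑' k : ℕ, min ((1:ℝ) ^ 2) (μ (k + 1)) := tsum_mul_left
        _ ≤ M ^ 2 * A := by
            apply mul_le_mul_of_nonneg_left hS1 (by positivity)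
    have hMmem : ν ≤ M := by
      apply hlb
      refine ⟨hM0, ?_⟩
      have h1 : Real.sqrt (∑' k : ℕ, min (M ^ 2) (μ (k + 1))) ≤ M * C' := by
        calc Real.sqrt (∑' k : ℕ, min (M ^ 2) (μ (k + 1)))
            ≤ Real.sqrt (M ^ 2 * A) := Real.sqrt_le_sqrt hSM
          _ = M * C' := by
              rw [Real.sqrt_mul (by positivity), Real.sqrt_sq hM0.le, hC'def]
      have h2 : M * C' ≤ 40 * M ^ 2 * Real.sqrt n := by
        have h3 : C' ≤ M * 40 := (div_le_iff₀ (by norm_num : (0:ℝ) < 40)).mp hMC'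
        nlinarith [hM0, hsn1, hC'pos, h3]
      rw [one_div, mul_comm, ← div_eq_mul_inv, div_le_iff₀ hsn]
      calc Real.sqrt (∑' k : ℕ, min (M ^ 2) (μ (k + 1))) ≤ M * C' := h1
        _ ≤ 40 * M ^ 2 * Real.sqrt n := h2
    have hν2 : ν ^ 2 ≤ M ^ 2 := pow_le_pow_left₀ hν0.le hMmem 2
    have hfin : M ^ 2 ≤ M ^ (2 * p + 2) * ((n:ℝ) ^ p)⁻¹ := by
      rw [← div_eq_mul_inv, le_div_iff₀ hnp]
      have h1 : (n:ℝ) ^ p ≤ M ^ (2 * p) := by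
        calc (n:ℝ) ^ p ≤ (M ^ (2:ℝ)) ^ p := Real.rpow_le_rpow hn0.le hnM2 hp0.le
          _ = M ^ (2 * p) := by rw [← Real.rpow_mul hM0.le]
      calc M ^ 2 * (n:ℝ) ^ p ≤ M ^ 2 * M ^ (2 * p) := by
            apply mul_le_mul_of_nonneg_left h1 (by positivity)
        _ = M ^ (2 * p + 2) := by
            rw [← Real.rpow_natCast M 2, ← Real.rpow_add hM0]
            push_cast
            ring_nf
    linarith
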